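/- Offline pessimism with expected uncertainty (Theorem 3.1, Option I, deterministic form): suppose the true reward is linear, r*(x,a) = ⟨θ*, φ(x,a)⟩, let θ̂ ∈ ℝ^d and a symmetric positive definite Σ ∈ ℝ^{d×d} satisfy ‖θ̂ − θ*‖_Σ ≤ β for some β ≥ 0, let ν ∈ ℝ^d, let Π be a set of policies each satisfying supp(π(·|x)) ⊆ supp(π0(·|x)), and suppose π̂ ∈ Π maximizes over π ∈ Π the objective ⟨θ̂, E_{x∼d0} φ(x,π)⟩ − β·‖E_{x∼d0} φ(x,π) − ν‖_{Σ^{-1}} − η·E_{x∼d0} KL(π(·|x)‖π0(·|x)). Then for every π ∈ Π, J(π) − J(π̂) ≤ 2β·‖E_{x∼d0} φ(x,π) − ν‖_{Σ^{-1}}. -/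

import Mathlib

open Finset Matrix

/-- KL divergence between two distributions on a finite set. -/
noncomputable def KL {A : Type*} [Fintype A] (p q : A → ℝ) : ℝ :=
  ∑ a, p a * Real.log (p a / q a)

/-- KL-regularized value of a policy. -/
noncomputable def J {X A : Type*} [Fintype X] [Fintype A]
    (d0 : X → ℝ) (pi0 : X → A → ℝ) (η : ℝ) (rstar : X → A → ℝ)
    (p : X → A → ℝ) : ℝ :=
  ∑ x, d0 x * ((∑ a, p x a * rstar x a) - η * KL (p x) (pi0 x))

/-- The matrix-weighted norm ‖v‖_M = √(vᵀ M v). -/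
noncomputable def matNorm {d : ℕ} (M : Matrix (Fin d) (Fin d) ℝ) (v : Fin d → ℝ) : ℝ :=
  Real.sqrt (v ⬝ᵥ M.mulVec v)

/-- Expected feature vector E_{x∼d0, a∼p(·|x)} φ(x,a). -/
noncomputable def featMean {X A : Type*} [Fintype X] [Fintype A] {d : ℕ}
    (d0 : X → ℝ) (φ : X → A → Fin d → ℝ) (p : X → A → ℝ) : Fin d → ℝ :=
  ∑ x, d0 x • ∑ a, p x a • φ x a

lemma matNorm_nonneg {d : ℕ} (M : Matrix (Fin d) (Fin d) ℝ) (v : Fin d → ℝ) :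
    0 ≤ matNorm M v := Real.sqrt_nonneg _

lemma matNorm_neg {d : ℕ} (M : Matrix (Fin d) (Fin d) ℝ) (v : Fin d → ℝ) :
    matNorm M (-v) = matNorm M v := by
  simp [matNorm, Matrix.mulVec_neg]

lemma cs {d : ℕ} {M : Matrix (Fin d) (Fin d) ℝ} (hM : M.PosDef) (u v : Fin d → ℝ) :
    u ⬝ᵥ v ≤ matNorm M u * matNorm M⁻¹ v := by
  have hinv : Invertible M := hM.isUnit.invertible
  set w : Fin d → ℝ := M⁻¹.mulVec v with hw
  have hMw : M.mulVec w = v := by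
    rw [hw, Matrix.mulVec_mulVec, Matrix.mul_inv_of_invertible, Matrix.one_mulVec]
  have hsym : ∀ a b : Fin d → ℝ, a ⬝ᵥ M.mulVec b = b ⬝ᵥ M.mulVec a := by
    intro a b
    have hT : Mᵀ = M := by
      ext i j
      have := congrFun (congrFun hM.isHermitian.eq i) j
      simpa using this
    rw [Matrix.dotProduct_mulVec, ← Matrix.mulVec_transpose, hT]
    exact (dotProduct_comm _ _)
  have hnn : ∀ t : ℝ, 0 ≤ (w ⬝ᵥ M.mulVec w) * (t * t) + (2 * (u ⬝ᵥ M.mulVec w)) * t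
      + u ⬝ᵥ M.mulVec u := by
    intro t
    have := (hM.posSemidef).dotProduct_mulVec_nonneg (u + t • w)
    have hexp : (u + t • w) ⬝ᵥ M.mulVec (u + t • w)
        = (w ⬝ᵥ M.mulVec w) * (t * t) + (2 * (u ⬝ᵥ M.mulVec w)) * t + u ⬝ᵥ M.mulVec u := by
      rw [Matrix.mulVec_add, Matrix.mulVec_smul]
      simp only [add_dotProduct, smul_dotProduct, dotProduct_add,
        dotProduct_smul, smul_eq_mul]
      rw [hsym w u]
      ring
    simpa [hexp] using this
  have hd := discrim_le_zero hnn
  have hsq : (u ⬝ᵥ M.mulVec w) ^ 2 ≤ (u ⬝ᵥ M.mulVec u) * (w ⬝ᵥ M.mulVec w) := by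
    have : discrim (w ⬝ᵥ M.mulVec w) (2 * (u ⬝ᵥ M.mulVec w)) (u ⬝ᵥ M.mulVec u) ≤ 0 := hd
    rw [discrim] at this
    nlinarith [this]
  have hww : w ⬝ᵥ M.mulVec w = v ⬝ᵥ M⁻¹.mulVec v := by
    have hT : M⁻¹ᵀ = M⁻¹ := by
      ext i j
      have := congrFun (congrFun hM.inv.isHermitian.eq i) j
      simpa using this
    rw [hMw, hw, Matrix.dotProduct_mulVec, ← Matrix.mulVec_transpose, hT]
  have huv : u ⬝ᵥ v = u ⬝ᵥ M.mulVec w := by rw [hMw]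
  rw [huv, matNorm, matNorm]
  calc u ⬝ᵥ M.mulVec w ≤ |u ⬝ᵥ M.mulVec w| := le_abs_self _
    _ = Real.sqrt ((u ⬝ᵥ M.mulVec w) ^ 2) := (Real.sqrt_sq_eq_abs _).symm
    _ ≤ Real.sqrt ((u ⬝ᵥ M.mulVec u) * (w ⬝ᵥ M.mulVec w)) := Real.sqrt_le_sqrt hsq
    _ = Real.sqrt (u ⬝ᵥ M.mulVec u) * Real.sqrt (v ⬝ᵥ M⁻¹.mulVec v) := by
        have h1 : 0 ≤ u ⬝ᵥ M.mulVec u := by simpa using (hM.posSemidef).dotProduct_mulVec_nonneg u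
        rw [hww, Real.sqrt_mul h1]


lemma Jlin {X A : Type*} [Fintype X] [Fintype A] {d : ℕ}
    (d0 : X → ℝ) (pi0 : X → A → ℝ) (η : ℝ) (θ : Fin d → ℝ)
    (φ : X → A → Fin d → ℝ) (p : X → A → ℝ) :
    J d0 pi0 η (fun x a => θ ⬝ᵥ φ x a) p
      = θ ⬝ᵥ featMean d0 φ p - η * ∑ x, d0 x * KL (p x) (pi0 x) := by
  have h1 : θ ⬝ᵥ featMean d0 φ p = ∑ x, d0 x * ∑ a, p x a * (θ ⬝ᵥ φ x a) := by
    simp only [featMean, Finset.sum_apply, Pi.smul_apply, smul_eq_mul, dotProduct,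
      Finset.mul_sum, Finset.sum_mul]
    rw [Finset.sum_comm]
    exact Finset.sum_congr rfl fun x _ => by
      rw [Finset.sum_comm]
      exact Finset.sum_congr rfl fun a _ => Finset.sum_congr rfl fun i _ => by ring
  rw [h1]
  simp only [_root_.J]
  rw [Finset.mul_sum, ← Finset.sum_sub_distrib]
  exact Finset.sum_congr rfl fun x _ => by ring

theorem offline_pessimism_optionI
    {X A : Type*} [Fintype X] [Fintype A] {d : ℕ}
    (d0 : X → ℝ) (hd0 : ∀ x, 0 ≤ d0 x) (hd0sum : ∑ x, d0 x = 1)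
    (η : ℝ) (hη : 0 < η)
    (pi0 : X → A → ℝ) (hpi0pos : ∀ x a, 0 < pi0 x a) (hpi0sum : ∀ x, ∑ a, pi0 x a = 1)
    (φ : X → A → Fin d → ℝ)
    (θstar θhat : Fin d → ℝ)
    (Sig : Matrix (Fin d) (Fin d) ℝ) (hSig : Sig.PosDef)
    (β : ℝ) (hβ : 0 ≤ β)
    (hest : matNorm Sig (θhat - θstar) ≤ β)
    (ν : Fin d → ℝ)
    (Pol : Set (X → A → ℝ))
    (hPol : ∀ p ∈ Pol, (∀ x a, 0 ≤ p x a) ∧ (∀ x, ∑ a, p x a = 1)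
      ∧ (∀ x a, p x a ≠ 0 → pi0 x a ≠ 0))
    (phat : X → A → ℝ) (hphatmem : phat ∈ Pol)
    (hmax : ∀ p ∈ Pol,
      (θhat ⬝ᵥ featMean d0 φ p) - β * matNorm Sig⁻¹ (featMean d0 φ p - ν)
          - η * ∑ x, d0 x * KL (p x) (pi0 x)
        ≤ (θhat ⬝ᵥ featMean d0 φ phat) - β * matNorm Sig⁻¹ (featMean d0 φ phat - ν)
          - η * ∑ x, d0 x * KL (phat x) (pi0 x)) :
    ∀ p ∈ Pol,
      J d0 pi0 η (fun x a => θstar ⬝ᵥ φ x a) p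
          - J d0 pi0 η (fun x a => θstar ⬝ᵥ φ x a) phat
        ≤ 2 * β * matNorm Sig⁻¹ (featMean d0 φ p - ν) := by
  intro p hp
  have hJp := Jlin d0 pi0 η θstar φ p
  have hJh := Jlin d0 pi0 η θstar φ phat
  have hmaxp := hmax p hp
  set μp := featMean d0 φ p with hμp
  set μh := featMean d0 φ phat with hμh
  set np := matNorm Sig⁻¹ (μp - ν) with hnp
  set nh := matNorm Sig⁻¹ (μh - ν) with hnh
  have hest' : matNorm Sig (θstar - θhat) ≤ β := by
    rw [← matNorm_neg, neg_sub]; exact hest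
  have c1 : (θstar - θhat) ⬝ᵥ (μp - ν) ≤ β * np :=
    le_trans (cs hSig _ _) (mul_le_mul_of_nonneg_right hest' (matNorm_nonneg _ _))
  have c2 : (θhat - θstar) ⬝ᵥ (μh - ν) ≤ β * nh :=
    le_trans (cs hSig _ _) (mul_le_mul_of_nonneg_right hest (matNorm_nonneg _ _))
  simp only [sub_dotProduct, dotProduct_sub] at c1 c2
  rw [hJp, hJh]
  linarith
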